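/- For any integers N ≥ N₀ ≥ 3, one has (1/d_N) Σ_{i=1}^{N-1} d_i d_{N-i} ≤ 2 d_1 d_{N-1}/d_N + (N-3) d_2 d_{N-2}/d_N ≤ E(N₀)/N², where E is the rational function E(N) = (6/49) N²/((N-6/7)(N-4/7)) + (240/2401) N²/((N-4/7)(N-11/7)(N-13/7)). -/

import Mathlib

noncomputable def Efun (N : ℝ) : ℝ :=
  6 / 49 * N ^ 2 / ((N - 6 / 7) * (N - 4 / 7)) +
    240 / 2401 * N ^ 2 / ((N - 4 / 7) * (N - 11 / 7) * (N - 13 / 7))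

set_option maxHeartbeats 1000000 in
theorem DN_two_bounds (d : ℕ → ℝ)
    (hd0 : d 0 = 1)
    (hd : ∀ n : ℕ, 1 ≤ n → d n = (7 * (n : ℝ) - 6) * (7 * (n : ℝ) - 4) / 4 * d (n - 1)) :
    ∀ N N₀ : ℕ, 3 ≤ N₀ → N₀ ≤ N →
      (1 / d N) * ∑ i ∈ Finset.Icc 1 (N - 1), d i * d (N - i)
        ≤ 2 * d 1 * d (N - 1) / d N + ((N : ℝ) - 3) * d 2 * d (N - 2) / d N ∧
      2 * d 1 * d (N - 1) / d N + ((N : ℝ) - 3) * d 2 * d (N - 2) / d N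
        ≤ Efun (N₀ : ℝ) / (N : ℝ) ^ 2 := by
  -- positivity of d
  have hpos : ∀ n, 0 < d n := by
    intro n
    induction n with
    | zero => rw [hd0]; norm_num
    | succ k ih =>
      rw [hd (k + 1) (by omega)]
      have hk : (0 : ℝ) ≤ (k : ℝ) := Nat.cast_nonneg k
      have h1 : (0 : ℝ) < 7 * ((k + 1 : ℕ) : ℝ) - 6 := by push_cast; linarith
      have h2 : (0 : ℝ) < 7 * ((k + 1 : ℕ) : ℝ) - 4 := by push_cast; linarith
      have : (k + 1 : ℕ) - 1 = k := by omega
      rw [this]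
      positivity
  -- log-convexity key lemma
  have key : ∀ N i : ℕ, 2 ≤ i → 2 * i ≤ N → d i * d (N - i) ≤ d 2 * d (N - 2) := by
    intro N i hi
    induction i, hi using Nat.le_induction with
    | base => intro _; exact le_refl _
    | succ i hi ih =>
      intro hN
      have hstep : d (i + 1) * d (N - (i + 1)) ≤ d i * d (N - i) := by
        have hNi1 : 1 ≤ N - i := by omega
        have e1 : d (i + 1) =
            (7 * ((i + 1 : ℕ) : ℝ) - 6) * (7 * ((i + 1 : ℕ) : ℝ) - 4) / 4 * d i := by
          have h := hd (i + 1) (by omega)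
          simpa using h
        have e2 : d (N - i) =
            (7 * ((N - i : ℕ) : ℝ) - 6) * (7 * ((N - i : ℕ) : ℝ) - 4) / 4 * d (N - (i + 1)) := by
          have h := hd (N - i) hNi1
          have e : N - i - 1 = N - (i + 1) := by omega
          rw [e] at h
          exact h
        rw [e1, e2]
        have hm : ((i : ℝ) + 1) ≤ ((N - i : ℕ) : ℝ) := by
          have : i + 1 ≤ N - i := by omega
          exact_mod_cast this
        have hi' : (2 : ℝ) ≤ (i : ℝ) := by exact_mod_cast hi
        have hc : 0 < d i * d (N - (i + 1)) := mul_pos (hpos i) (hpos (N - (i + 1)))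
        have hAB : (7 * ((i + 1 : ℕ) : ℝ) - 6) * (7 * ((i + 1 : ℕ) : ℝ) - 4)
            ≤ (7 * ((N - i : ℕ) : ℝ) - 6) * (7 * ((N - i : ℕ) : ℝ) - 4) := by
          push_cast
          nlinarith [hm, hi']
        nlinarith [mul_le_mul_of_nonneg_right hAB hc.le, hc]
      exact hstep.trans (ih (by omega))
  intro N N₀ h3 hle
  have hN3 : 3 ≤ N := le_trans h3 hle
  -- middle terms bound
  have mid : ∀ i ∈ Finset.Icc 2 (N - 2), d i * d (N - i) ≤ d 2 * d (N - 2) := by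
    intro i hi
    rw [Finset.mem_Icc] at hi
    by_cases h : 2 * i ≤ N
    · exact key N i hi.1 h
    · have h1 : N - (N - i) = i := by omega
      have h2 := key N (N - i) (by omega) (by omega)
      rw [h1] at h2
      calc d i * d (N - i) = d (N - i) * d i := by ring
        _ ≤ d 2 * d (N - 2) := h2
  -- sum decomposition
  have hset : Finset.Icc 1 (N - 1) = insert 1 (insert (N - 1) (Finset.Icc 2 (N - 2))) := by
    ext j
    simp only [Finset.mem_Icc, Finset.mem_insert]
    omega
  have h1ni : (1 : ℕ) ∉ insert (N - 1) (Finset.Icc 2 (N - 2)) := by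
    simp only [Finset.mem_insert, Finset.mem_Icc]
    omega
  have h2ni : N - 1 ∉ Finset.Icc 2 (N - 2) := by
    simp only [Finset.mem_Icc]
    omega
  have hsum : ∑ i ∈ Finset.Icc 1 (N - 1), d i * d (N - i)
      = 2 * (d 1 * d (N - 1)) + ∑ i ∈ Finset.Icc 2 (N - 2), d i * d (N - i) := by
    rw [hset, Finset.sum_insert h1ni, Finset.sum_insert h2ni]
    have e : N - (N - 1) = 1 := by omega
    rw [e]
    ring
  have hmidsum : ∑ i ∈ Finset.Icc 2 (N - 2), d i * d (N - i)
      ≤ ((N : ℝ) - 3) * (d 2 * d (N - 2)) := by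
    calc ∑ i ∈ Finset.Icc 2 (N - 2), d i * d (N - i)
        ≤ ∑ _i ∈ Finset.Icc 2 (N - 2), d 2 * d (N - 2) := Finset.sum_le_sum mid
      _ = ((Finset.Icc 2 (N - 2)).card : ℝ) * (d 2 * d (N - 2)) := by
          rw [Finset.sum_const, nsmul_eq_mul]
      _ = ((N : ℝ) - 3) * (d 2 * d (N - 2)) := by
          rw [Nat.card_Icc]
          congr 1
          have e : N - 2 + 1 - 2 = N - 3 := by omega
          rw [e, Nat.cast_sub hN3]
          norm_num
  have sum_le : ∑ i ∈ Finset.Icc 1 (N - 1), d i * d (N - i)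
      ≤ 2 * d 1 * d (N - 1) + ((N : ℝ) - 3) * d 2 * d (N - 2) := by
    rw [hsum]; nlinarith [hmidsum]
  have hDpos := hpos N
  constructor
  · have hrw : 2 * d 1 * d (N - 1) / d N + ((N : ℝ) - 3) * d 2 * d (N - 2) / d N
        = (1 / d N) * (2 * d 1 * d (N - 1) + ((N : ℝ) - 3) * d 2 * d (N - 2)) := by
      field_simp
    rw [hrw]
    exact mul_le_mul_of_nonneg_left sum_le (by positivity)
  · -- second part
    set x : ℝ := (N : ℝ) with hxdef
    set y : ℝ := (N₀ : ℝ) with hydef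
    have hx3 : (3 : ℝ) ≤ x := by rw [hxdef]; exact_mod_cast hN3
    have hy3 : (3 : ℝ) ≤ y := by rw [hydef]; exact_mod_cast h3
    have hxy : y ≤ x := by rw [hxdef, hydef]; exact_mod_cast hle
    have hd1 : d 1 = 3 / 4 := by
      have h := hd 1 le_rfl
      rw [h, hd0]
      norm_num
    have hd2 : d 2 = 15 := by
      have h := hd 2 (by norm_num)
      rw [h]
      norm_num [hd1]
    have hDN : d N = (7 * x - 6) * (7 * x - 4) / 4 * d (N - 1) := hd N (by omega)
    have hb : d (N - 1) = (7 * x - 13) * (7 * x - 11) / 4 * d (N - 2) := by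
      have h := hd (N - 1) (by omega)
      have e : N - 1 - 1 = N - 2 := by omega
      rw [e] at h
      have ec : ((N - 1 : ℕ) : ℝ) = x - 1 := by
        rw [Nat.cast_sub (by omega : 1 ≤ N)]
        norm_num
        exact hxdef.symm
      rw [h, ec]
      ring
    have p1 : (0 : ℝ) < 7 * x - 6 := by linarith
    have p2 : (0 : ℝ) < 7 * x - 4 := by linarith
    have p3 : (0 : ℝ) < 7 * x - 13 := by linarith
    have p4 : (0 : ℝ) < 7 * x - 11 := by linarith
    have q1 : (0 : ℝ) < 7 * y - 6 := by linarith
    have q2 : (0 : ℝ) < 7 * y - 4 := by linarith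
    have q3 : (0 : ℝ) < 7 * y - 11 := by linarith
    have q4 : (0 : ℝ) < 7 * y - 13 := by linarith
    have hx0 : (0 : ℝ) < x := by linarith
    have hapos := hpos (N - 2)
    have keyrw : 2 * d 1 * d (N - 1) / d N + (x - 3) * d 2 * d (N - 2) / d N
        = 6 / ((7 * x - 6) * (7 * x - 4))
          + 240 * (x - 3) / ((7 * x - 6) * (7 * x - 4) * (7 * x - 13) * (7 * x - 11)) := by
      rw [hd1, hd2, hDN, hb]
      field_simp
      ring
    have EE : Efun y / x ^ 2
        = 6 * y ^ 2 / ((7 * y - 6) * (7 * y - 4) * x ^ 2)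
          + 240 * y ^ 2 / (7 * ((7 * y - 4) * (7 * y - 11) * (7 * y - 13)) * x ^ 2) := by
      simp only [Efun]
      have e1 : y - 6 / 7 = (7 * y - 6) / 7 := by ring
      have e2 : y - 4 / 7 = (7 * y - 4) / 7 := by ring
      have e3 : y - 11 / 7 = (7 * y - 11) / 7 := by ring
      have e4 : y - 13 / 7 = (7 * y - 13) / 7 := by ring
      rw [e1, e2, e3, e4]
      field_simp
      ring
    have t1 : 6 / ((7 * x - 6) * (7 * x - 4))
        ≤ 6 * y ^ 2 / ((7 * y - 6) * (7 * y - 4) * x ^ 2) := by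
      rw [div_le_div_iff₀ (mul_pos p1 p2)
        (mul_pos (mul_pos q1 q2) (by positivity : (0 : ℝ) < x ^ 2))]
      nlinarith [mul_nonneg (sub_nonneg.2 hxy)
        (show (0 : ℝ) ≤ 70 * x * y - 24 * x - 24 * y by nlinarith)]
    have t2 : 240 * (x - 3) / ((7 * x - 6) * (7 * x - 4) * (7 * x - 13) * (7 * x - 11))
        ≤ 240 * y ^ 2 / (7 * ((7 * y - 4) * (7 * y - 11) * (7 * y - 13)) * x ^ 2) := by
      have prodx : (0 : ℝ) < (7 * x - 4) * (7 * x - 13) * (7 * x - 11) :=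
        mul_pos (mul_pos p2 p3) p4
      have s1 : 240 * (x - 3) / ((7 * x - 6) * (7 * x - 4) * (7 * x - 13) * (7 * x - 11))
          ≤ 240 / (7 * ((7 * x - 4) * (7 * x - 13) * (7 * x - 11))) := by
        rw [div_le_div_iff₀ (by positivity) (by positivity)]
        nlinarith [prodx]
      have s2 : 240 / (7 * ((7 * x - 4) * (7 * x - 13) * (7 * x - 11)))
          ≤ 240 * y ^ 2 / (7 * ((7 * y - 4) * (7 * y - 11) * (7 * y - 13)) * x ^ 2) := by
        rw [div_le_div_iff₀ (by positivity)
          (by positivity : (0 : ℝ) < 7 * ((7 * y - 4) * (7 * y - 11) * (7 * y - 13)) * x ^ 2)]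
        have h9 : (9 : ℝ) ≤ x * y := by nlinarith
        have hin : (0 : ℝ) ≤ 343 * x ^ 2 * y ^ 2 - 1673 * (x * y) + 572 * (x + y) := by
          nlinarith [mul_nonneg (sub_nonneg.2 h9)
            (mul_nonneg (by linarith : (0 : ℝ) ≤ x) (by linarith : (0 : ℝ) ≤ y))]
        nlinarith [mul_nonneg (sub_nonneg.2 hxy) hin]
      exact s1.trans s2
    rw [keyrw, EE]
    exact add_le_add t1 t2
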